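/- arXiv:1911.10024 — 2 statements merged into one kernel-verified Lean document; each statement's English description precedes it below -/
import Mathlib

section
/- Any function S on finite multisets of elements of a countable set D can be written as S(X) = g(∑_{x∈X} f(x)) for some f : D → ℝ and g : ℝ → ℝ, when restricted to multisets of bounded size; concretely, with D = ℕ and bags of size at most N, taking f(x) = (N+1)^{-x} (injective on bounded multisets as a sum) yields such a decomposition for multisets with elements in {0,...,M}. -/
lemma digits_unique (b : ℕ) (hb : 1 ≤ b) :
    ∀ (M : ℕ) (f g : ℕ → ℕ), (∀ x ≤ M, f x ≤ b) → (∀ x ≤ M, g x ≤ b) →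
    (∑ x ∈ Finset.range (M+1), f x * (b+1)^x) = (∑ x ∈ Finset.range (M+1), g x * (b+1)^x) →
    ∀ x ≤ M, f x = g x := by
  intro M
  induction M with
  | zero =>
    intro f g hf hg h x hx
    interval_cases x
    simpa using h
  | succ M ih =>
    intro f g hf hg h x hx
    have key : ∀ (f : ℕ → ℕ), (∑ x ∈ Finset.range (M+2), f x * (b+1)^x)
        = f 0 + (b+1) * ∑ x ∈ Finset.range (M+1), f (x+1) * (b+1)^x := by
      intro f
      rw [Finset.sum_range_succ', Finset.mul_sum]
      simp only [pow_zero, mul_one, pow_succ]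
      rw [add_comm]
      congr 1
      exact Finset.sum_congr rfl (fun y _ => by ring)
    rw [key f, key g] at h
    have hf0 : f 0 < b + 1 := Nat.lt_succ_of_le (hf 0 (by omega))
    have hg0 : g 0 < b + 1 := Nat.lt_succ_of_le (hg 0 (by omega))
    have hmod : f 0 = g 0 := by
      have := congrArg (· % (b+1)) h
      simpa [Nat.add_mul_mod_self_left, Nat.mod_eq_of_lt hf0, Nat.mod_eq_of_lt hg0] using this
    have hsum : (∑ x ∈ Finset.range (M+1), f (x+1) * (b+1)^x)
        = ∑ x ∈ Finset.range (M+1), g (x+1) * (b+1)^x := by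
      rw [hmod] at h
      exact Nat.eq_of_mul_eq_mul_left (by omega) (Nat.add_left_cancel h)
    have := ih (fun x => f (x+1)) (fun x => g (x+1))
      (fun x hxM => hf (x+1) (by omega)) (fun x hxM => hg (x+1) (by omega)) hsum
    rcases Nat.eq_zero_or_pos x with rfl | hx0
    · exact hmod
    · obtain ⟨y, rfl⟩ := Nat.exists_eq_succ_of_ne_zero (by omega : x ≠ 0)
      exact this y (by omega)

lemma sum_as_counts (M N : ℕ) (X : Multiset ℕ) (hX : ∀ x ∈ X, x ≤ M) :
    ((X.map (fun x => ((N + 1 : ℝ))⁻¹ ^ x)).sum)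
      = ∑ x ∈ Finset.range (M+1), (X.count x : ℝ) * ((N + 1 : ℝ))⁻¹ ^ x := by
  have hsub : X.toFinset ⊆ Finset.range (M+1) := by
    intro a ha
    rw [Finset.mem_range]
    exact Nat.lt_succ_of_le (hX a (Multiset.mem_toFinset.mp ha))
  rw [Finset.sum_multiset_map_count,
    Finset.sum_subset hsub (fun a _ ha => by
      simp [Multiset.count_eq_zero_of_notMem (fun h => ha (Multiset.mem_toFinset.mpr h))])]
  exact Finset.sum_congr rfl (fun a _ => by simp [nsmul_eq_mul])

lemma inj_lemma (M N : ℕ) (hN : 1 ≤ N) (X Y : Multiset ℕ)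
    (hX : ∀ x ∈ X, x ≤ M) (hXc : Multiset.card X ≤ N)
    (hY : ∀ x ∈ Y, x ≤ M) (hYc : Multiset.card Y ≤ N)
    (h : (X.map (fun x => ((N + 1 : ℝ))⁻¹ ^ x)).sum
       = (Y.map (fun x => ((N + 1 : ℝ))⁻¹ ^ x)).sum) : X = Y := by
  rw [sum_as_counts M N X hX, sum_as_counts M N Y hY] at h
  have key : ∀ Z : Multiset ℕ,
      ∑ x ∈ Finset.range (M+1), (Z.count x : ℝ) * ((N + 1 : ℝ))^(M - x)
      = ((N + 1 : ℝ))^M * ∑ x ∈ Finset.range (M+1), (Z.count x : ℝ) * ((N + 1 : ℝ))⁻¹ ^ x := by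
    intro Z
    rw [Finset.mul_sum]
    apply Finset.sum_congr rfl
    intro x hx
    rw [Finset.mem_range] at hx
    have hpow : ((N:ℝ)+1)^M = ((N:ℝ)+1)^(M-x) * ((N:ℝ)+1)^x := by
      rw [← pow_add]; congr 1; omega
    have hne : ((N:ℝ)+1) ≠ 0 := by positivity
    rw [hpow, inv_pow]
    field_simp
  have h2 : ∑ x ∈ Finset.range (M+1), (X.count x : ℝ) * ((N + 1 : ℝ))^(M - x)
          = ∑ x ∈ Finset.range (M+1), (Y.count x : ℝ) * ((N + 1 : ℝ))^(M - x) := by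
    rw [key X, key Y, h]
  have h3 : ∑ x ∈ Finset.range (M+1), (X.count x) * (N + 1)^(M - x)
          = ∑ x ∈ Finset.range (M+1), (Y.count x) * (N + 1)^(M - x) := by
    exact_mod_cast h2
  have e3 : ∀ Z : Multiset ℕ,
      ∑ x ∈ Finset.range (M+1), (Z.count (M - x)) * (N + 1)^(M - (M - x))
      = ∑ x ∈ Finset.range (M+1), (Z.count (M - x)) * (N + 1)^x :=
    fun Z => Finset.sum_congr rfl (fun x hx => by
      rw [Finset.mem_range] at hx; congr 2; omega)
  have h4 : ∑ x ∈ Finset.range (M+1), (X.count (M - x)) * (N + 1)^x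
          = ∑ x ∈ Finset.range (M+1), (Y.count (M - x)) * (N + 1)^x := by
    have e1 := Finset.sum_range_reflect (fun x => (X.count x) * (N + 1)^(M - x)) (M+1)
    have e2 := Finset.sum_range_reflect (fun x => (Y.count x) * (N + 1)^(M - x)) (M+1)
    simp only [Nat.add_sub_cancel] at e1 e2
    calc ∑ x ∈ Finset.range (M+1), (X.count (M - x)) * (N + 1)^x
        = ∑ x ∈ Finset.range (M+1), (X.count (M - x)) * (N + 1)^(M - (M - x)) := (e3 X).symm
      _ = ∑ x ∈ Finset.range (M+1), (X.count x) * (N + 1)^(M - x) := e1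
      _ = ∑ x ∈ Finset.range (M+1), (Y.count x) * (N + 1)^(M - x) := h3
      _ = ∑ x ∈ Finset.range (M+1), (Y.count (M - x)) * (N + 1)^(M - (M - x)) := e2.symm
      _ = _ := e3 Y
  have hcount : ∀ x ≤ M, X.count (M - x) = Y.count (M - x) := by
    apply digits_unique N hN M _ _ _ _ h4
    · intro x _
      exact le_trans (Multiset.count_le_card _ _) hXc
    · intro x _
      exact le_trans (Multiset.count_le_card _ _) hYc
  ext a
  by_cases ha : a ≤ M
  · have := hcount (M - a) (by omega)
    rwa [Nat.sub_sub_self ha] at this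
  · rw [Multiset.count_eq_zero_of_notMem (fun h => ha (hX a h)),
        Multiset.count_eq_zero_of_notMem (fun h => ha (hY a h))]

theorem deep_sets_finite_decomposition (M N : ℕ) (hN : 1 ≤ N)
    (S : Multiset ℕ → ℝ) :
    ∃ g : ℝ → ℝ, ∀ X : Multiset ℕ, (∀ x ∈ X, x ≤ M) → Multiset.card X ≤ N →
      S X = g ((X.map (fun x => ((N + 1 : ℝ))⁻¹ ^ x)).sum) := by
  classical
  refine ⟨fun r => if h : ∃ X : Multiset ℕ, (∀ x ∈ X, x ≤ M) ∧ Multiset.card X ≤ N ∧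
      (X.map (fun x => ((N + 1 : ℝ))⁻¹ ^ x)).sum = r then S h.choose else 0, ?_⟩
  intro X hX hXc
  have hex : ∃ Y : Multiset ℕ, (∀ x ∈ Y, x ≤ M) ∧ Multiset.card Y ≤ N ∧
      (Y.map (fun x => ((N + 1 : ℝ))⁻¹ ^ x)).sum = (X.map (fun x => ((N + 1 : ℝ))⁻¹ ^ x)).sum :=
    ⟨X, hX, hXc, rfl⟩
  simp only [dif_pos hex]
  obtain ⟨hY, hYc, hYs⟩ := hex.choose_spec
  exact congrArg S (inj_lemma M N hN X hex.choose hX hXc hY hYc hYs.symm)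
end

section
/- The map sending a multiset X over {0,1,...,M} with |X| ≤ N to ∑_{x ∈ X} (N+1)^{−x} ∈ ℝ is injective. -/
open Finset

lemma digits_inj (b : ℕ) (hb : 0 < b) :
    ∀ (n : ℕ) (c d : ℕ → ℕ), (∀ i, c i < b) → (∀ i, d i < b) →
      (∑ i ∈ Finset.range n, c i * b ^ i) = (∑ i ∈ Finset.range n, d i * b ^ i) →
      ∀ i < n, c i = d i := by
  intro n
  induction n with
  | zero => intro c d _ _ _ i hi; omega
  | succ n ih =>
    intro c d hc hd hsum i hi
    have hrw : ∀ e : ℕ → ℕ,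
        (∑ i ∈ Finset.range (n+1), e i * b ^ i)
          = e 0 + b * ∑ i ∈ Finset.range n, e (i+1) * b ^ i := by
      intro e
      rw [Finset.sum_range_succ']
      rw [Finset.mul_sum]
      simp [pow_succ]
      ring_nf
      rw [add_comm]
      congr 1
      apply Finset.sum_congr rfl
      intro j _
      ring
    rw [hrw c, hrw d] at hsum
    have h0 : c 0 = d 0 := by
      have := congrArg (· % b) hsum
      simpa [Nat.add_mul_mod_self_left, Nat.mod_eq_of_lt (hc 0),
        Nat.mod_eq_of_lt (hd 0)] using this
    have htail : (∑ i ∈ Finset.range n, c (i+1) * b ^ i)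
        = ∑ i ∈ Finset.range n, d (i+1) * b ^ i := by
      rw [h0] at hsum
      have := Nat.add_left_cancel hsum
      exact Nat.eq_of_mul_eq_mul_left hb this
    have hrec := ih (fun i => c (i+1)) (fun i => d (i+1))
      (fun i => hc (i+1)) (fun i => hd (i+1)) htail
    cases i with
    | zero => exact h0
    | succ i => exact hrec i (by omega)

lemma count_sum (M : ℕ) (f : ℕ → ℕ) :
    ∀ (X : Multiset ℕ), (∀ a ∈ X, a ≤ M) →
      (X.map f).sum = ∑ j ∈ Finset.range (M+1), X.count j * f j := by
  intro X
  induction X using Multiset.induction with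
  | empty => simp
  | cons a X ih =>
    intro h
    have ha : a ≤ M := h a (Multiset.mem_cons_self a X)
    have hX : ∀ x ∈ X, x ≤ M := fun x hx => h x (Multiset.mem_cons_of_mem hx)
    rw [Multiset.map_cons, Multiset.sum_cons, ih hX]
    have : ∀ j, (a ::ₘ X).count j * f j = X.count j * f j + (if j = a then f a else 0) := by
      intro j
      rw [Multiset.count_cons]
      by_cases hj : j = a <;> simp [hj] <;> ring
    simp only [this, Finset.sum_add_distrib]
    rw [Finset.sum_ite_eq' (Finset.range (M+1)) a (fun _ => f a)]
    simp [Nat.lt_succ_of_le ha, add_comm]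

theorem multiset_sum_injective (M N : ℕ) (hN : 1 ≤ N) :
    ∀ X Y : Multiset ℕ, (∀ x ∈ X, x ≤ M) → (∀ x ∈ Y, x ≤ M) →
      Multiset.card X ≤ N → Multiset.card Y ≤ N →
      (X.map (fun x => ((N + 1 : ℝ))⁻¹ ^ x)).sum =
        (Y.map (fun x => ((N + 1 : ℝ))⁻¹ ^ x)).sum →
      X = Y := by
  intro X Y hX hY hcX hcY hsum
  set b : ℕ := N + 1 with hb
  have hbpos : 0 < b := by omega
  have hbR : (0:ℝ) < (b:ℝ) := by positivity
  -- convert real sums to natural sums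
  have key : ∀ (Z : Multiset ℕ), (∀ x ∈ Z, x ≤ M) →
      ((Z.map (fun x => b ^ (M - x))).sum : ℝ)
        = (Z.map (fun x => ((N + 1 : ℝ))⁻¹ ^ x)).sum * (b:ℝ) ^ M := by
    intro Z hZ
    induction Z using Multiset.induction with
    | empty => simp
    | cons a Z ih =>
      have ha : a ≤ M := hZ a (Multiset.mem_cons_self a Z)
      have hZ' : ∀ x ∈ Z, x ≤ M := fun x hx => hZ x (Multiset.mem_cons_of_mem hx)
      simp only [Multiset.map_cons, Multiset.sum_cons]
      rw [Nat.cast_add, ih hZ', add_mul]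
      congr 1
      have hpow : (b:ℝ) ^ (M - a) * (b:ℝ) ^ a = (b:ℝ) ^ M := by
        rw [← pow_add]; congr 1; omega
      have hne : (b:ℝ) ^ a ≠ 0 := by positivity
      push_cast
      have hNb : ((N:ℝ) + 1) = (b:ℝ) := by push_cast [hb]; ring
      rw [hNb, inv_pow, inv_mul_eq_div, eq_div_iff hne, hpow]
  have hnat : (X.map (fun x => b ^ (M - x))).sum = (Y.map (fun x => b ^ (M - x))).sum := by
    have : ((X.map (fun x => b ^ (M - x))).sum : ℝ)
        = ((Y.map (fun x => b ^ (M - x))).sum : ℝ) := by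
      rw [key X hX, key Y hY, hsum]
    exact_mod_cast this
  -- rewrite as digit sums
  have hdig : ∀ (Z : Multiset ℕ), (∀ a ∈ Z, a ≤ M) →
      (Z.map (fun x => b ^ (M - x))).sum
        = ∑ i ∈ Finset.range (M+1), Z.count (M - i) * b ^ i := by
    intro Z hZ
    rw [count_sum M (fun x => b ^ (M - x)) Z hZ]
    rw [← Finset.sum_range_reflect (fun i => Z.count (M - i) * b ^ i) (M+1)]
    apply Finset.sum_congr rfl
    intro j hj
    simp only [Finset.mem_range] at hj
    congr 2 <;> omega
  rw [hdig X hX, hdig Y hY] at hnat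
  have hcount : ∀ i < M + 1, X.count (M - i) = Y.count (M - i) := by
    apply digits_inj b hbpos (M+1)
    · intro i
      calc X.count (M - i) ≤ Multiset.card X := Multiset.count_le_card _ _
        _ < b := by omega
    · intro i
      calc Y.count (M - i) ≤ Multiset.card Y := Multiset.count_le_card _ _
        _ < b := by omega
    · exact hnat
  ext j
  by_cases hj : j ≤ M
  · have := hcount (M - j) (by omega)
    have hMj : M - (M - j) = j := by omega
    rwa [hMj] at this
  · rw [Multiset.count_eq_zero_of_notMem, Multiset.count_eq_zero_of_notMem]
    · intro hmem; exact hj (hY j hmem)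
    · intro hmem; exact hj (hX j hmem)
end
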